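/- Let ζ be Anick's automorphism of R = k[y₁,y₂,y₃,y₄] and suppose ζ = φₙ ∘ ⋯ ∘ φ₁ where each φᵢ is an elementary automorphism preserving the grading deg y₁ = deg y₂ = 1, deg y₃ = deg y₄ = -1. Let ρ be obtained from this composition by replacing every nonlinear elementary factor that changes y₃ or y₄ by its linear part. Then ρ(y₃) = y₃, ρ(y₄) = y₄, and the polynomials f = ζ(y₁) - ρ(y₁) and g = ζ(y₂) - ρ(y₂) lie in I³, where I = (y₁, y₂). -/

import Mathlib

open MvPolynomial

/-- Description of an elementary automorphism of `k[y₁,y₂,y₃,y₄]`: either a linear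
map, or the addition to the variable `y_{i₀}` of a polynomial `f` (in the other
variables). -/
inductive ElemDesc (k : Type) [Field k] where
  | lin (A : Matrix (Fin 4) (Fin 4) k) : ElemDesc k
  | add (i₀ : Fin 4) (f : MvPolynomial (Fin 4) k) : ElemDesc k

namespace ElemDesc

variable {k : Type} [Field k]

/-- The images of the variables under the described elementary map. -/
noncomputable def toVec : ElemDesc k → (Fin 4 → MvPolynomial (Fin 4) k)
  | lin A => fun i => ∑ j, C (A i j) * X j
  | add i₀ f => Function.update X i₀ (X i₀ + f)

/-- The described elementary map as an algebra endomorphism. -/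
noncomputable def toHom (d : ElemDesc k) : MvPolynomial (Fin 4) k →ₐ[k] MvPolynomial (Fin 4) k :=
  aeval d.toVec

/-- The replacement rule: a (possibly nonlinear) elementary factor changing `y₃` or
`y₄` is replaced by its linear part; all other factors are kept. -/
noncomputable def rhoHom : ElemDesc k → (MvPolynomial (Fin 4) k →ₐ[k] MvPolynomial (Fin 4) k)
  | lin A => toHom (lin A)
  | add i₀ f =>
    if i₀ = 2 ∨ i₀ = 3 then
      aeval (Function.update X i₀ (X i₀ + homogeneousComponent 1 f))
    else toHom (add i₀ f)

/-- A description is admissible if it gives an elementary automorphism preserving the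
grading `deg y₁ = deg y₂ = 1`, `deg y₃ = deg y₄ = -1`. -/
def IsGood (d : ElemDesc k) : Prop :=
  Function.Bijective d.toHom ∧
  (∀ j : Fin 4, d.toVec j ∈ weightedHomogeneousSubmodule k
    (![1, 1, -1, -1] : Fin 4 → ℤ) ((![1, 1, -1, -1] : Fin 4 → ℤ) j)) ∧
  (match d with
    | lin _ => True
    | add i₀ f => f ∈ MvPolynomial.supported k ({i₀}ᶜ : Set (Fin 4)))

end ElemDesc


namespace AnickAux

open ElemDesc

variable {k : Type} [Field k]



/-- All monomials of `p` have degree at least `s` in the first two variables. -/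
def memJ (s : ℕ) (p : MvPolynomial (Fin 4) k) : Prop :=
  ∀ D ∈ p.support, s ≤ D 0 + D 1

lemma memJ_zero (s : ℕ) : memJ s (0 : MvPolynomial (Fin 4) k) := by
  intro D hD; simp at hD

lemma memJ_of_zero (p : MvPolynomial (Fin 4) k) : memJ 0 p := fun _ _ => Nat.zero_le _

lemma memJ.mono {s t : ℕ} {p : MvPolynomial (Fin 4) k} (h : memJ s p) (hts : t ≤ s) :
    memJ t p := fun D hD => le_trans hts (h D hD)

lemma memJ.add {s : ℕ} {p q : MvPolynomial (Fin 4) k} (hp : memJ s p) (hq : memJ s q) :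
    memJ s (p + q) := by
  intro D hD
  have := MvPolynomial.support_add (p := p) (q := q) hD
  rcases Finset.mem_union.mp this with h | h
  · exact hp D h
  · exact hq D h

lemma memJ.sum {s : ℕ} {ι : Type*} (t : Finset ι) (f : ι → MvPolynomial (Fin 4) k)
    (h : ∀ i ∈ t, memJ s (f i)) : memJ s (∑ i ∈ t, f i) := by
  classical
  induction t using Finset.induction_on with
  | empty => simpa using memJ_zero s
  | insert _ _ hni ih =>
    rw [Finset.sum_insert hni]
    exact (h _ (Finset.mem_insert_self _ _)).add
      (ih fun i hi => h i (Finset.mem_insert_of_mem hi))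

lemma memJ.mul {s t : ℕ} {p q : MvPolynomial (Fin 4) k} (hp : memJ s p) (hq : memJ t q) :
    memJ (s + t) (p * q) := by
  classical
  intro D hD
  have := MvPolynomial.support_mul p q hD
  rw [Finset.mem_add] at this
  obtain ⟨D₁, h₁, D₂, h₂, rfl⟩ := this
  have := hp D₁ h₁; have := hq D₂ h₂
  simp only [Finsupp.add_apply]
  omega

lemma memJ_X0_pow (n : ℕ) : memJ n ((X 0 : MvPolynomial (Fin 4) k) ^ n) := by
  intro D hD
  rw [MvPolynomial.support_X_pow] at hD
  rcases Finset.mem_singleton.mp hD with rfl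
  simp [Finsupp.single_apply]

lemma memJ_X1_pow (n : ℕ) : memJ n ((X 1 : MvPolynomial (Fin 4) k) ^ n) := by
  intro D hD
  rw [MvPolynomial.support_X_pow] at hD
  rcases Finset.mem_singleton.mp hD with rfl
  simp [Finsupp.single_apply]

/-- Weight computation for the grading `![1,1,-1,-1]`. -/
lemma weight_apply4 (D : Fin 4 →₀ ℕ) :
    (Finsupp.weight (![1, 1, -1, -1] : Fin 4 → ℤ)) D
      = (D 0 : ℤ) + D 1 - D 2 - D 3 := by
  rw [Finsupp.weight_apply, Finsupp.sum_fintype]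
  · rw [Fin.sum_univ_four]
    simp [smul_eq_mul]
    ring
  · intro i; simp

lemma degree_apply4 (D : Fin 4 →₀ ℕ) :
    D.degree = D 0 + D 1 + D 2 + D 3 := by
  rw [Finsupp.degree_eq_weight_one, Finsupp.weight_apply, Finsupp.sum_fintype]
  · rw [Fin.sum_univ_four]; simp
  · intro i; simp




/-- The ideal `I = (y₁, y₂)`. -/
noncomputable def Iid (k : Type) [Field k] : Ideal (MvPolynomial (Fin 4) k) :=
  Ideal.span {X 0, X 1}

lemma X0_mem_I : (X 0 : MvPolynomial (Fin 4) k) ∈ Iid k :=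
  Ideal.subset_span (by simp)

lemma X1_mem_I : (X 1 : MvPolynomial (Fin 4) k) ∈ Iid k :=
  Ideal.subset_span (by simp)

lemma memJ_le_pow {s : ℕ} {p : MvPolynomial (Fin 4) k} (hp : memJ s p) :
    p ∈ (Iid k) ^ s := by
  classical
  rw [p.as_sum]
  refine Ideal.sum_mem _ fun D hD => ?_
  have hs : s ≤ D 0 + D 1 := hp D hD
  have key : (X 0 : MvPolynomial (Fin 4) k) ^ (D 0) * X 1 ^ (D 1) ∈ (Iid k) ^ s := by
    have h1 : (X 0 : MvPolynomial (Fin 4) k) ^ (D 0) * X 1 ^ (D 1)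
        ∈ (Iid k) ^ (D 0) * (Iid k) ^ (D 1) :=
      Ideal.mul_mem_mul (Ideal.pow_mem_pow X0_mem_I _) (Ideal.pow_mem_pow X1_mem_I _)
    rw [← pow_add] at h1
    exact Ideal.pow_le_pow_right hs h1
  have hexp : (monomial D (coeff D p) : MvPolynomial (Fin 4) k)
      = (C (coeff D p) * X 2 ^ (D 2) * X 3 ^ (D 3)) * (X 0 ^ (D 0) * X 1 ^ (D 1)) := by
    rw [monomial_eq, Finsupp.prod_fintype _ _ (fun i => pow_zero _), Fin.prod_univ_four]
    ring
  rw [hexp]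
  exact Ideal.mul_mem_left _ _ key

lemma mem_I_memJ {p : MvPolynomial (Fin 4) k} (hp : p ∈ Iid k) : memJ 1 p := by
  refine Submodule.span_induction ?_ ?_ ?_ ?_ hp
  · rintro x hx
    rcases hx with rfl | rfl <;>
    · intro D hD
      rw [MvPolynomial.support_X] at hD
      rcases Finset.mem_singleton.mp hD with rfl
      simp [Finsupp.single_apply]
  · intro D hD; simp at hD
  · intro x y _ _ hx hy
    intro D hD
    have := MvPolynomial.support_add (p := x) (q := y) hD
    rcases Finset.mem_union.mp this with h | h
    · exact hx D h
    · exact hy D h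
  · intro c x _ hx
    intro D hD
    classical
    rw [smul_eq_mul] at hD
    have := MvPolynomial.support_mul c x hD
    rw [Finset.mem_add] at this
    obtain ⟨D₁, h₁, D₂, h₂, rfl⟩ := this
    have := hx D₂ h₂
    simp only [Finsupp.add_apply]
    omega

/-- weighted-homogeneous implies memJ bound. -/
lemma isWH_weight_eq {p : MvPolynomial (Fin 4) k} {m : ℤ}
    (hp : p.IsWeightedHomogeneous (![1,1,-1,-1] : Fin 4 → ℤ) m) :
    ∀ D ∈ p.support, (D 0 : ℤ) + D 1 - D 2 - D 3 = m := by
  intro D hD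
  have := hp (MvPolynomial.mem_support_iff.mp hD)
  rw [Finsupp.weight_apply, Finsupp.sum_fintype] at this
  · rw [Fin.sum_univ_four] at this
    simp only [smul_eq_mul, Matrix.cons_val_zero, Matrix.cons_val_one, Matrix.head_cons,
      Matrix.cons_val_two, Matrix.tail_cons, Matrix.cons_val_three] at this
    rw [← this]; ring
  · intro i; simp

lemma isWH_one_mem_I {p : MvPolynomial (Fin 4) k}
    (hp : p.IsWeightedHomogeneous (![1,1,-1,-1] : Fin 4 → ℤ) 1) : p ∈ Iid k := by
  have : memJ 1 p := by
    intro D hD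
    have := isWH_weight_eq hp D hD
    omega
  simpa using memJ_le_pow (s := 1) this

lemma IsWH_pow {w : Fin 4 → ℤ} {p : MvPolynomial (Fin 4) k} {n : ℤ}
    (h : p.IsWeightedHomogeneous w n) (e : ℕ) :
    (p ^ e).IsWeightedHomogeneous w (e • n) := by
  have := MvPolynomial.IsWeightedHomogeneous.prod (Finset.range e) (fun _ => p)
    (fun _ => n) (w := w) (fun _ _ => h)
  simpa using this

/-- `aeval` along a weight-preserving substitution preserves weighted homogeneity. -/
lemma aeval_isWH {w : Fin 4 → ℤ} {v : Fin 4 → MvPolynomial (Fin 4) k}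
    (hv : ∀ j, (v j).IsWeightedHomogeneous w (w j))
    {p : MvPolynomial (Fin 4) k} {m : ℤ} (hp : p.IsWeightedHomogeneous w m) :
    (aeval v p).IsWeightedHomogeneous w m := by
  classical
  conv_lhs => rw [p.as_sum]
  rw [map_sum]
  refine MvPolynomial.IsWeightedHomogeneous.sum _ _ _ fun D hD => ?_
  rw [aeval_monomial]
  have hprod : (D.prod fun i e => v i ^ e).IsWeightedHomogeneous w
      ((Finsupp.weight w) D) := by
    rw [Finsupp.prod]
    have hkey : (Finsupp.weight w) D = ∑ i ∈ D.support, (D i) • w i := by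
      rw [Finsupp.weight_apply]; rfl
    rw [hkey]
    exact MvPolynomial.IsWeightedHomogeneous.prod D.support (fun i => v i ^ D i)
      (fun i => (D i) • w i) (w := w) (fun i _ => IsWH_pow (hv i) (D i))
  have hw : (Finsupp.weight w) D = m := hp (MvPolynomial.mem_support_iff.mp hD)
  rw [hw] at hprod
  have : (algebraMap k (MvPolynomial (Fin 4) k)) (coeff D p) = C (coeff D p) := rfl
  rw [this]
  have := (MvPolynomial.isWeightedHomogeneous_C w (coeff D p)).mul hprod
  rwa [zero_add] at this




lemma supported_apply_zero {i₀ : Fin 4} {f : MvPolynomial (Fin 4) k}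
    (hf : f ∈ MvPolynomial.supported k ({i₀}ᶜ : Set (Fin 4))) :
    ∀ D ∈ f.support, D i₀ = 0 := by
  intro D hD
  by_contra h
  have hi : i₀ ∈ f.vars := (MvPolynomial.mem_vars i₀).mpr
    ⟨D, hD, Finsupp.mem_support_iff.mpr h⟩
  have := (MvPolynomial.mem_supported.mp hf) hi
  simp at this


/-- The nonlinear part of a good `f` lies in `J 1`. -/
lemma f_sub_hc_memJ {i₀ : Fin 4} (h2 : i₀ = 2 ∨ i₀ = 3) {f : MvPolynomial (Fin 4) k}
    (hf : f.IsWeightedHomogeneous (![1,1,-1,-1] : Fin 4 → ℤ) (-1))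
    (hsupp : ∀ D ∈ f.support, D i₀ = 0) :
    memJ 1 (f - homogeneousComponent 1 f) := by
  intro D hD
  have hco : coeff D (f - homogeneousComponent 1 f) ≠ 0 :=
    MvPolynomial.mem_support_iff.mp hD
  rw [MvPolynomial.coeff_sub, coeff_homogeneousComponent] at hco
  by_cases hdeg : D.degree = 1
  · rw [if_pos hdeg, sub_self] at hco; exact absurd rfl hco
  · rw [if_neg hdeg, sub_zero] at hco
    have hDf : D ∈ f.support := MvPolynomial.mem_support_iff.mpr hco
    have hw := isWH_weight_eq hf D hDf
    have hz := hsupp D hDf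
    have hdeg4 : D.degree = D 0 + D 1 + D 2 + D 3 := by
      rw [Finsupp.degree_eq_weight_one, Finsupp.weight_apply, Finsupp.sum_fintype]
      · rw [Fin.sum_univ_four]; simp
      · intro i; simp
    rw [hdeg4] at hdeg
    rcases h2 with rfl | rfl <;> omega

/-- The linear part of a good `f` (changing `y₃`) is a multiple of `y₄`. -/
lemma hc_eq_2 {f : MvPolynomial (Fin 4) k}
    (hf : f.IsWeightedHomogeneous (![1,1,-1,-1] : Fin 4 → ℤ) (-1))
    (hsupp : ∀ D ∈ f.support, D 2 = 0) :
    homogeneousComponent 1 f = C (coeff (Finsupp.single 3 1) f) * X 3 := by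
  have hdeg4 : ∀ D : Fin 4 →₀ ℕ, D.degree = D 0 + D 1 + D 2 + D 3 := by
    intro D
    rw [Finsupp.degree_eq_weight_one, Finsupp.weight_apply, Finsupp.sum_fintype]
    · rw [Fin.sum_univ_four]; simp
    · intro i; simp
  ext D
  rw [coeff_homogeneousComponent]
  rw [MvPolynomial.coeff_C_mul, MvPolynomial.coeff_X']
  by_cases hD : Finsupp.single 3 1 = D
  · subst hD
    rw [if_pos rfl, mul_one, if_pos]
    rw [hdeg4]; simp [Finsupp.single_apply]
  · rw [if_neg hD, mul_zero]
    by_cases hdeg : D.degree = 1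
    · rw [if_pos hdeg]
      by_contra hne
      have hDf : D ∈ f.support := MvPolynomial.mem_support_iff.mpr hne
      have hw := isWH_weight_eq hf D hDf
      have hz := hsupp D hDf
      rw [hdeg4] at hdeg
      have h0 : D 0 = 0 := by omega
      have h1 : D 1 = 0 := by omega
      have h3 : D 3 = 1 := by omega
      apply hD
      ext i
      fin_cases i <;> simp [Finsupp.single_apply, h0, h1, hz, h3]
    · rw [if_neg hdeg]

/-- The linear part of a good `f` (changing `y₄`) is a multiple of `y₃`. -/
lemma hc_eq_3 {f : MvPolynomial (Fin 4) k}
    (hf : f.IsWeightedHomogeneous (![1,1,-1,-1] : Fin 4 → ℤ) (-1))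
    (hsupp : ∀ D ∈ f.support, D 3 = 0) :
    homogeneousComponent 1 f = C (coeff (Finsupp.single 2 1) f) * X 2 := by
  have hdeg4 : ∀ D : Fin 4 →₀ ℕ, D.degree = D 0 + D 1 + D 2 + D 3 := by
    intro D
    rw [Finsupp.degree_eq_weight_one, Finsupp.weight_apply, Finsupp.sum_fintype]
    · rw [Fin.sum_univ_four]; simp
    · intro i; simp
  ext D
  rw [coeff_homogeneousComponent]
  rw [MvPolynomial.coeff_C_mul, MvPolynomial.coeff_X']
  by_cases hD : Finsupp.single 2 1 = D
  · subst hD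
    rw [if_pos rfl, mul_one, if_pos]
    rw [hdeg4]; simp [Finsupp.single_apply]
  · rw [if_neg hD, mul_zero]
    by_cases hdeg : D.degree = 1
    · rw [if_pos hdeg]
      by_contra hne
      have hDf : D ∈ f.support := MvPolynomial.mem_support_iff.mpr hne
      have hw := isWH_weight_eq hf D hDf
      have hz := hsupp D hDf
      rw [hdeg4] at hdeg
      have h0 : D 0 = 0 := by omega
      have h1 : D 1 = 0 := by omega
      have h3 : D 2 = 1 := by omega
      apply hD
      ext i
      fin_cases i <;> simp [Finsupp.single_apply, h0, h1, hz, h3]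
    · rw [if_neg hdeg]


lemma memJ_pow_sub_pow {i : Fin 4} {f g : MvPolynomial (Fin 4) k}
    (hfg : memJ 1 (f - g)) (n : ℕ) :
    memJ 1 ((X i + f) ^ n - (X i + g) ^ n) := by
  obtain ⟨q, hq⟩ := sub_dvd_pow_sub_pow (X i + f) (X i + g) n
  rw [hq]
  have h1 : (X i + f) - (X i + g) = f - g := by ring
  rw [h1]
  exact (hfg.mul (memJ_of_zero q)).mono (by omega)

/-- Key lemma: the difference between substituting `X i₀ ↦ X i₀ + f` and
`X i₀ ↦ X i₀ + g` on `r` lands in `J s`. -/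
lemma keyB {i₀ : Fin 4} (h2 : i₀ = 2 ∨ i₀ = 3) {f g : MvPolynomial (Fin 4) k}
    (hfg : memJ 1 (f - g)) (r : MvPolynomial (Fin 4) k) (s : ℕ)
    (hr : ∀ D ∈ r.support, 1 ≤ D i₀ → s ≤ D 0 + D 1 + 1) :
    memJ s (aeval (Function.update X i₀ (X i₀ + f)) r
      - aeval (Function.update X i₀ (X i₀ + g)) r) := by
  classical
  have expand : ∀ h : MvPolynomial (Fin 4) k,
      aeval (Function.update X i₀ (X i₀ + h)) r
        = ∑ D ∈ r.support, aeval (Function.update X i₀ (X i₀ + h))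
            (monomial D (coeff D r)) := by
    intro h
    conv_lhs => rw [r.as_sum]
    rw [map_sum]
  rw [expand f, expand g, ← Finset.sum_sub_distrib]
  refine memJ.sum _ _ fun D hD => ?_
  have prodform : ∀ h : MvPolynomial (Fin 4) k,
      aeval (Function.update X i₀ (X i₀ + h)) (monomial D (coeff D r))
        = C (coeff D r) * ((Function.update X i₀ (X i₀ + h) 0) ^ (D 0)
          * (Function.update X i₀ (X i₀ + h) 1) ^ (D 1)
          * (Function.update X i₀ (X i₀ + h) 2) ^ (D 2)
          * (Function.update X i₀ (X i₀ + h) 3) ^ (D 3)) := by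
    intro h
    rw [aeval_monomial, Finsupp.prod_fintype _ _ (fun i => pow_zero _), Fin.prod_univ_four]
    rfl
  rw [prodform f, prodform g]
  rcases h2 with rfl | rfl
  · simp only [Function.update_of_ne (show (0:Fin 4) ≠ 2 by decide),
      Function.update_of_ne (show (1:Fin 4) ≠ 2 by decide),
      Function.update_of_ne (show (3:Fin 4) ≠ 2 by decide),
      Function.update_self]
    by_cases h : D 2 = 0
    · rw [h]
      simp only [pow_zero, mul_one]
      rw [sub_self]
      exact memJ_zero s
    · have hrw : C (coeff D r) * (X 0 ^ (D 0) * X 1 ^ (D 1) * (X 2 + f) ^ (D 2) * X 3 ^ (D 3))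
          - C (coeff D r) * (X 0 ^ (D 0) * X 1 ^ (D 1) * (X 2 + g) ^ (D 2) * X 3 ^ (D 3))
          = (C (coeff D r) * X 0 ^ (D 0) * X 1 ^ (D 1) * X 3 ^ (D 3))
            * ((X 2 + f) ^ (D 2) - (X 2 + g) ^ (D 2)) := by ring
      rw [hrw]
      have hmul := ((((memJ_of_zero (C (coeff D r))).mul (memJ_X0_pow (D 0))).mul
        (memJ_X1_pow (D 1))).mul (memJ_of_zero ((X 3 : MvPolynomial (Fin 4) k) ^ (D 3)))).mul
        (memJ_pow_sub_pow (i := 2) hfg (D 2))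
      refine hmul.mono ?_
      have := hr D hD (Nat.one_le_iff_ne_zero.mpr h)
      omega
  · simp only [Function.update_of_ne (show (0:Fin 4) ≠ 3 by decide),
      Function.update_of_ne (show (1:Fin 4) ≠ 3 by decide),
      Function.update_of_ne (show (2:Fin 4) ≠ 3 by decide),
      Function.update_self]
    by_cases h : D 3 = 0
    · rw [h]
      simp only [pow_zero, mul_one]
      rw [sub_self]
      exact memJ_zero s
    · have hrw : C (coeff D r) * (X 0 ^ (D 0) * X 1 ^ (D 1) * X 2 ^ (D 2) * (X 3 + f) ^ (D 3))
          - C (coeff D r) * (X 0 ^ (D 0) * X 1 ^ (D 1) * X 2 ^ (D 2) * (X 3 + g) ^ (D 3))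
          = (C (coeff D r) * X 0 ^ (D 0) * X 1 ^ (D 1) * X 2 ^ (D 2))
            * ((X 3 + f) ^ (D 3) - (X 3 + g) ^ (D 3)) := by ring
      rw [hrw]
      have hmul := ((((memJ_of_zero (C (coeff D r))).mul (memJ_X0_pow (D 0))).mul
        (memJ_X1_pow (D 1))).mul (memJ_of_zero ((X 2 : MvPolynomial (Fin 4) k) ^ (D 2)))).mul
        (memJ_pow_sub_pow (i := 3) hfg (D 3))
      refine hmul.mono ?_
      have := hr D hD (Nat.one_le_iff_ne_zero.mpr h)
      omega


lemma single_weight (i : Fin 4) :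
    (Finsupp.weight (![1,1,-1,-1] : Fin 4 → ℤ)) (Finsupp.single i 1)
      = (![1,1,-1,-1] : Fin 4 → ℤ) i := by
  rw [Finsupp.weight_apply, Finsupp.sum_single_index] <;> simp

/-- A linear weighted-homogeneous polynomial of weight `-1` only involves `X 2, X 3`. -/
lemma lin_row {c : Fin 4 → k}
    (h : (∑ j, C (c j) * X j : MvPolynomial (Fin 4) k).IsWeightedHomogeneous
      (![1,1,-1,-1] : Fin 4 → ℤ) (-1)) :
    (∑ j, C (c j) * X j : MvPolynomial (Fin 4) k) = C (c 2) * X 2 + C (c 3) * X 3 := by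
  have key : ∀ i : Fin 4, coeff (Finsupp.single i 1) (∑ j, C (c j) * X j : MvPolynomial (Fin 4) k)
      = c i := by
    intro i
    rw [Fin.sum_univ_four]
    simp only [MvPolynomial.coeff_add, MvPolynomial.coeff_C_mul, MvPolynomial.coeff_X',
      Finsupp.single_eq_single_iff]
    fin_cases i <;> simp
  have h0 : c 0 = 0 := by
    rw [← key 0]
    refine h.coeff_eq_zero _ ?_
    rw [single_weight]; decide
  have h1 : c 1 = 0 := by
    rw [← key 1]
    refine h.coeff_eq_zero _ ?_
    rw [single_weight]; decide
  rw [Fin.sum_univ_four, h0, h1]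
  simp

/-- A linear combination of `X 2, X 3` lying in `J 1` is zero. -/
lemma memJ_linear {α β : k} (h : memJ 1 (C α * X 2 + C β * X 3 : MvPolynomial (Fin 4) k)) :
    α = 0 ∧ β = 0 := by
  have key : ∀ i : Fin 4, (2:Fin 4) = i ∨ (3:Fin 4) = i → ∀ γ : k,
      coeff (Finsupp.single i 1) (C α * X 2 + C β * X 3 : MvPolynomial (Fin 4) k) = γ →
      γ ≠ 0 → False := by
    intro i hi γ hγ hne
    have hmem : Finsupp.single i 1 ∈
        (C α * X 2 + C β * X 3 : MvPolynomial (Fin 4) k).support := by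
      rw [MvPolynomial.mem_support_iff, hγ]; exact hne
    have := h _ hmem
    rcases hi with rfl | rfl <;> simp [Finsupp.single_apply] at this
  constructor
  · by_contra hne
    refine key 2 (Or.inl rfl) α ?_ hne
    simp only [MvPolynomial.coeff_add, MvPolynomial.coeff_C_mul, MvPolynomial.coeff_X',
      Finsupp.single_eq_single_iff]
    simp
  · by_contra hne
    refine key 3 (Or.inr rfl) β ?_ hne
    simp only [MvPolynomial.coeff_add, MvPolynomial.coeff_C_mul, MvPolynomial.coeff_X',
      Finsupp.single_eq_single_iff]
    simp


/-- The inductive invariant. -/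
def Inv (P Q : MvPolynomial (Fin 4) k →ₐ[k] MvPolynomial (Fin 4) k) : Prop :=
  (∀ i, (Q (X i)).IsWeightedHomogeneous (![1,1,-1,-1] : Fin 4 → ℤ)
    ((![1,1,-1,-1] : Fin 4 → ℤ) i)) ∧
  (∃ a b : k, Q (X 2) = C a * X 2 + C b * X 3) ∧
  (∃ a b : k, Q (X 3) = C a * X 2 + C b * X 3) ∧
  (P (X 0) - Q (X 0)) ∈ (Iid k) ^ 3 ∧ (P (X 1) - Q (X 1)) ∈ (Iid k) ^ 3 ∧
  (P (X 2) - Q (X 2)) ∈ Iid k ∧ (P (X 3) - Q (X 3)) ∈ Iid k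

lemma algHom_C' (φ : MvPolynomial (Fin 4) k →ₐ[k] MvPolynomial (Fin 4) k) (r : k) :
    φ (C r) = C r := by
  rw [← MvPolynomial.algebraMap_eq, AlgHom.commutes]

lemma mapI {d : ElemDesc k} (hd : d.IsGood) {s : ℕ} {p : MvPolynomial (Fin 4) k}
    (hp : p ∈ (Iid k) ^ s) : d.toHom p ∈ (Iid k) ^ s := by
  have hX0 : d.toHom (X 0) ∈ Iid k := by
    have h1 : (d.toVec 0).IsWeightedHomogeneous (![1,1,-1,-1] : Fin 4 → ℤ) 1 := by
      simpa using hd.2.1 0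
    rw [show d.toHom (X 0) = d.toVec 0 from aeval_X _ _]
    exact isWH_one_mem_I h1
  have hX1 : d.toHom (X 1) ∈ Iid k := by
    have h1 : (d.toVec 1).IsWeightedHomogeneous (![1,1,-1,-1] : Fin 4 → ℤ) 1 := by
      simpa using hd.2.1 1
    rw [show d.toHom (X 1) = d.toVec 1 from aeval_X _ _]
    exact isWH_one_mem_I h1
  have hmap : Ideal.map d.toHom ((Iid k) ^ s) ≤ (Iid k) ^ s := by
    rw [Ideal.map_pow]
    refine Ideal.pow_right_mono ?_ s
    rw [Iid, Ideal.map_span, Set.image_insert_eq, Set.image_singleton, Ideal.span_le]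
    rintro x (rfl | rfl)
    · exact hX0
    · exact hX1
  exact hmap (Ideal.mem_map_of_mem _ hp)

lemma mapI1 {d : ElemDesc k} (hd : d.IsGood) {p : MvPolynomial (Fin 4) k}
    (hp : p ∈ Iid k) : d.toHom p ∈ Iid k := by
  have := mapI hd (s := 1) (by rwa [pow_one])
  rwa [pow_one] at this

lemma inv_step (d : ElemDesc k) (hd : d.IsGood)
    {P Q : MvPolynomial (Fin 4) k →ₐ[k] MvPolynomial (Fin 4) k} (h : Inv P Q) :
    Inv (d.toHom.comp P) (d.rhoHom.comp Q) := by
  obtain ⟨hH, ⟨a2, b2, h2⟩, ⟨a3, b3, h3⟩, hd0, hd1, hd2, hd3⟩ := h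
  have hv : ∀ j, (d.toVec j).IsWeightedHomogeneous (![1,1,-1,-1] : Fin 4 → ℤ)
      ((![1,1,-1,-1] : Fin 4 → ℤ) j) := fun j => hd.2.1 j
  obtain A | ⟨i₀, f⟩ := d
  case lin =>
    have hrho : (ElemDesc.lin A).rhoHom = (ElemDesc.lin A).toHom := rfl
    have hrow2 := lin_row (c := fun j => A 2 j) (hv 2)
    have hrow3 := lin_row (c := fun j => A 3 j) (hv 3)
    have hX2 : (ElemDesc.lin A).toHom (X 2) = C (A 2 2) * X 2 + C (A 2 3) * X 3 := by
      rw [show (ElemDesc.lin A).toHom (X 2) = (ElemDesc.lin A).toVec 2 from aeval_X _ _]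
      exact hrow2
    have hX3 : (ElemDesc.lin A).toHom (X 3) = C (A 3 2) * X 2 + C (A 3 3) * X 3 := by
      rw [show (ElemDesc.lin A).toHom (X 3) = (ElemDesc.lin A).toVec 3 from aeval_X _ _]
      exact hrow3
    refine ⟨fun i => aeval_isWH hv (hH i), ?_, ?_, ?_, ?_, ?_, ?_⟩
    · refine ⟨a2 * A 2 2 + b2 * A 3 2, a2 * A 2 3 + b2 * A 3 3, ?_⟩
      rw [AlgHom.comp_apply, hrho, h2, map_add, map_mul, map_mul,
        algHom_C', algHom_C', hX2, hX3]
      simp only [MvPolynomial.algebraMap_eq, map_add, map_mul]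
      ring
    · refine ⟨a3 * A 2 2 + b3 * A 3 2, a3 * A 2 3 + b3 * A 3 3, ?_⟩
      rw [AlgHom.comp_apply, hrho, h3, map_add, map_mul, map_mul,
        algHom_C', algHom_C', hX2, hX3]
      simp only [MvPolynomial.algebraMap_eq, map_add, map_mul]
      ring
    all_goals
      rw [hrho, AlgHom.comp_apply, AlgHom.comp_apply, ← map_sub]
    · exact mapI hd hd0
    · exact mapI hd hd1
    · exact mapI1 hd hd2
    · exact mapI1 hd hd3
  case add =>
  by_cases hcase : i₀ = 2 ∨ i₀ = 3
  · -- the replaced case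
    have hrho : (ElemDesc.add i₀ f).rhoHom
        = aeval (Function.update X i₀ (X i₀ + homogeneousComponent 1 f)) := by
      rw [ElemDesc.rhoHom, if_pos hcase]
    have hwi : (![1,1,-1,-1] : Fin 4 → ℤ) i₀ = -1 := by
      rcases hcase with rfl | rfl <;> decide
    have hfWH : f.IsWeightedHomogeneous (![1,1,-1,-1] : Fin 4 → ℤ) (-1) := by
      have h1 := hv i₀
      rw [show (ElemDesc.add i₀ f).toVec i₀ = X i₀ + f from Function.update_self _ _ _,
        hwi] at h1
      have : f = (X i₀ + f) - X i₀ := by ring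
      rw [this]
      have hX := isWeightedHomogeneous_X k (![1,1,-1,-1] : Fin 4 → ℤ) i₀
      rw [hwi] at hX
      exact (weightedHomogeneousSubmodule k _ (-1)).sub_mem h1 hX
    have hsupp : ∀ D ∈ f.support, D i₀ = 0 := supported_apply_zero hd.2.2
    have hcWH : (homogeneousComponent 1 f).IsWeightedHomogeneous
        (![1,1,-1,-1] : Fin 4 → ℤ) (-1) := by
      intro D hco
      rw [coeff_homogeneousComponent] at hco
      by_cases hdeg : D.degree = 1
      · rw [if_pos hdeg] at hco
        exact hfWH hco
      · rw [if_neg hdeg] at hco; exact absurd rfl hco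
    have hv' : ∀ j, ((Function.update X i₀ (X i₀ + homogeneousComponent 1 f)) j
        ).IsWeightedHomogeneous (![1,1,-1,-1] : Fin 4 → ℤ)
        ((![1,1,-1,-1] : Fin 4 → ℤ) j) := by
      intro j
      rcases eq_or_ne j i₀ with rfl | hne
      · rw [Function.update_self, hwi]
        have hX := isWeightedHomogeneous_X k (![1,1,-1,-1] : Fin 4 → ℤ) j
        rw [hwi] at hX
        exact hX.add hcWH
      · rw [Function.update_of_ne hne]
        exact isWeightedHomogeneous_X k _ j
    have hfg := f_sub_hc_memJ hcase hfWH hsupp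
    have hdiff : ∀ (r : MvPolynomial (Fin 4) k) (s : ℕ),
        (∀ D ∈ r.support, 1 ≤ D i₀ → s ≤ D 0 + D 1 + 1) →
        memJ s ((ElemDesc.add i₀ f).toHom r - (ElemDesc.add i₀ f).rhoHom r) := by
      intro r s hr
      rw [hrho]
      exact keyB hcase hfg r s hr
    refine ⟨?_, ?_, ?_, ?_, ?_, ?_, ?_⟩
    · intro i
      rw [AlgHom.comp_apply, hrho]
      exact aeval_isWH hv' (hH i)
    · -- Q' (X 2)
      rcases hcase with rfl | rfl
      · refine ⟨a2, a2 * coeff (Finsupp.single 3 1) f + b2, ?_⟩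
        rw [AlgHom.comp_apply, hrho, h2, map_add, map_mul, map_mul,
          algHom_C', algHom_C', aeval_X, aeval_X,
          Function.update_self, Function.update_of_ne (show (3:Fin 4) ≠ 2 by decide),
          hc_eq_2 hfWH hsupp]
        simp only [MvPolynomial.algebraMap_eq, map_add, map_mul]
        ring
      · refine ⟨a2 + b2 * coeff (Finsupp.single 2 1) f, b2, ?_⟩
        rw [AlgHom.comp_apply, hrho, h2, map_add, map_mul, map_mul,
          algHom_C', algHom_C', aeval_X, aeval_X,
          Function.update_self, Function.update_of_ne (show (2:Fin 4) ≠ 3 by decide),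
          hc_eq_3 hfWH hsupp]
        simp only [MvPolynomial.algebraMap_eq, map_add, map_mul]
        ring
    · -- Q' (X 3)
      rcases hcase with rfl | rfl
      · refine ⟨a3, a3 * coeff (Finsupp.single 3 1) f + b3, ?_⟩
        rw [AlgHom.comp_apply, hrho, h3, map_add, map_mul, map_mul,
          algHom_C', algHom_C', aeval_X, aeval_X,
          Function.update_self, Function.update_of_ne (show (3:Fin 4) ≠ 2 by decide),
          hc_eq_2 hfWH hsupp]
        simp only [MvPolynomial.algebraMap_eq, map_add, map_mul]
        ring
      · refine ⟨a3 + b3 * coeff (Finsupp.single 2 1) f, b3, ?_⟩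
        rw [AlgHom.comp_apply, hrho, h3, map_add, map_mul, map_mul,
          algHom_C', algHom_C', aeval_X, aeval_X,
          Function.update_self, Function.update_of_ne (show (2:Fin 4) ≠ 3 by decide),
          hc_eq_3 hfWH hsupp]
        simp only [MvPolynomial.algebraMap_eq, map_add, map_mul]
        ring
    · -- X 0 difference
      have hsplit : (ElemDesc.add i₀ f).toHom (P (X 0)) - (ElemDesc.add i₀ f).rhoHom (Q (X 0))
          = (ElemDesc.add i₀ f).toHom (P (X 0) - Q (X 0))
            + ((ElemDesc.add i₀ f).toHom (Q (X 0)) - (ElemDesc.add i₀ f).rhoHom (Q (X 0))) := by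
        rw [map_sub]; ring
      rw [AlgHom.comp_apply, AlgHom.comp_apply, hsplit]
      refine Ideal.add_mem _ (mapI hd hd0) (memJ_le_pow (hdiff (Q (X 0)) 3 ?_))
      intro D hD hD2
      have := isWH_weight_eq (hH 0) D hD
      simp only [Matrix.cons_val_zero] at this
      rcases hcase with rfl | rfl <;> omega
    · -- X 1 difference
      have hsplit : (ElemDesc.add i₀ f).toHom (P (X 1)) - (ElemDesc.add i₀ f).rhoHom (Q (X 1))
          = (ElemDesc.add i₀ f).toHom (P (X 1) - Q (X 1))
            + ((ElemDesc.add i₀ f).toHom (Q (X 1)) - (ElemDesc.add i₀ f).rhoHom (Q (X 1))) := by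
        rw [map_sub]; ring
      rw [AlgHom.comp_apply, AlgHom.comp_apply, hsplit]
      refine Ideal.add_mem _ (mapI hd hd1) (memJ_le_pow (hdiff (Q (X 1)) 3 ?_))
      intro D hD hD2
      have := isWH_weight_eq (hH 1) D hD
      simp only [Matrix.cons_val_one, Matrix.head_cons, Matrix.cons_val_zero] at this
      rcases hcase with rfl | rfl <;> omega
    · -- X 2 difference
      have hsplit : (ElemDesc.add i₀ f).toHom (P (X 2)) - (ElemDesc.add i₀ f).rhoHom (Q (X 2))
          = (ElemDesc.add i₀ f).toHom (P (X 2) - Q (X 2))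
            + ((ElemDesc.add i₀ f).toHom (Q (X 2)) - (ElemDesc.add i₀ f).rhoHom (Q (X 2))) := by
        rw [map_sub]; ring
      rw [AlgHom.comp_apply, AlgHom.comp_apply, hsplit]
      have h1 : (ElemDesc.add i₀ f).toHom (P (X 2) - Q (X 2)) ∈ Iid k := by
        have := mapI hd (s := 1) (by rwa [pow_one] : P (X 2) - Q (X 2) ∈ (Iid k)^1)
        rwa [pow_one] at this
      have hmem := memJ_le_pow (hdiff (Q (X 2)) 1 (fun D _ _ => by omega))
      rw [pow_one] at hmem
      exact Ideal.add_mem _ h1 hmem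
    · -- X 3 difference
      have hsplit : (ElemDesc.add i₀ f).toHom (P (X 3)) - (ElemDesc.add i₀ f).rhoHom (Q (X 3))
          = (ElemDesc.add i₀ f).toHom (P (X 3) - Q (X 3))
            + ((ElemDesc.add i₀ f).toHom (Q (X 3)) - (ElemDesc.add i₀ f).rhoHom (Q (X 3))) := by
        rw [map_sub]; ring
      rw [AlgHom.comp_apply, AlgHom.comp_apply, hsplit]
      have h1 : (ElemDesc.add i₀ f).toHom (P (X 3) - Q (X 3)) ∈ Iid k := by
        have := mapI hd (s := 1) (by rwa [pow_one] : P (X 3) - Q (X 3) ∈ (Iid k)^1)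
        rwa [pow_one] at this
      have hmem := memJ_le_pow (hdiff (Q (X 3)) 1 (fun D _ _ => by omega))
      rw [pow_one] at hmem
      exact Ideal.add_mem _ h1 hmem
  · -- not replaced: rhoHom = toHom
    have hrho : (ElemDesc.add i₀ f).rhoHom = (ElemDesc.add i₀ f).toHom := by
      rw [ElemDesc.rhoHom, if_neg hcase]
    push_neg at hcase
    have hX2 : (ElemDesc.add i₀ f).toHom (X 2) = X 2 := by
      rw [show (ElemDesc.add i₀ f).toHom (X 2) = (ElemDesc.add i₀ f).toVec 2 from aeval_X _ _,
        ElemDesc.toVec, Function.update_of_ne (Ne.symm hcase.1)]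
    have hX3 : (ElemDesc.add i₀ f).toHom (X 3) = X 3 := by
      rw [show (ElemDesc.add i₀ f).toHom (X 3) = (ElemDesc.add i₀ f).toVec 3 from aeval_X _ _,
        ElemDesc.toVec, Function.update_of_ne (Ne.symm hcase.2)]
    refine ⟨fun i => by rw [AlgHom.comp_apply, hrho]; exact aeval_isWH hv (hH i),
      ⟨a2, b2, ?_⟩, ⟨a3, b3, ?_⟩, ?_, ?_, ?_, ?_⟩
    · rw [AlgHom.comp_apply, hrho, h2, map_add, map_mul, map_mul,
        algHom_C', algHom_C', hX2, hX3]
    · rw [AlgHom.comp_apply, hrho, h3, map_add, map_mul, map_mul,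
        algHom_C', algHom_C', hX2, hX3]
    all_goals
      rw [hrho, AlgHom.comp_apply, AlgHom.comp_apply, ← map_sub]
    · exact mapI hd hd0
    · exact mapI hd hd1
    · exact mapI1 hd hd2
    · exact mapI1 hd hd3

lemma inv_id : Inv (AlgHom.id k (MvPolynomial (Fin 4) k)) (AlgHom.id k (MvPolynomial (Fin 4) k)) := by
  refine ⟨fun i => isWeightedHomogeneous_X k _ i, ⟨1, 0, by simp⟩, ⟨0, 1, by simp⟩,
    ?_, ?_, ?_, ?_⟩ <;> simp only [AlgHom.id_apply, sub_self] <;> exact zero_mem _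

lemma inv_foldl (L : List (ElemDesc k)) (hgood : ∀ d ∈ L, d.IsGood) :
    Inv (L.foldl (fun acc d => d.toHom.comp acc) (AlgHom.id k (MvPolynomial (Fin 4) k)))
      (L.foldl (fun acc d => d.rhoHom.comp acc) (AlgHom.id k (MvPolynomial (Fin 4) k))) := by
  induction L using List.reverseRecOn with
  | nil => exact inv_id
  | append_singleton L d ih =>
    rw [List.foldl_append, List.foldl_append]
    simp only [List.foldl_cons, List.foldl_nil]
    exact inv_step d (hgood d (by simp)) (ih fun e he => hgood e (by simp [he]))


end AnickAux

/-- if Anick's automorphism `ζ` is a composition `φₙ ∘ ⋯ ∘ φ₁` of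
grading-preserving elementary automorphisms, and `ρ` is obtained by replacing every
factor changing `y₃` or `y₄` by its linear part, then `ρ(y₃) = y₃`, `ρ(y₄) = y₄`, and
`ζ(y₁) - ρ(y₁), ζ(y₂) - ρ(y₂) ∈ I³` where `I = (y₁,y₂)`. -/
theorem anick_linear_part_replacement (k : Type) [Field k] [CharZero k]
    (L : List (ElemDesc k))
    (hgood : ∀ d ∈ L, d.IsGood)
    (hζ : L.foldl (fun acc d => d.toHom.comp acc)
        (AlgHom.id k (MvPolynomial (Fin 4) k)) =
      (aeval ![X 0, X 1 + X 0 * (X 0 * X 3 - X 1 * X 2), X 2,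
          X 3 + X 2 * (X 0 * X 3 - X 1 * X 2)] :
        MvPolynomial (Fin 4) k →ₐ[k] MvPolynomial (Fin 4) k)) :
    (L.foldl (fun acc d => d.rhoHom.comp acc)
        (AlgHom.id k (MvPolynomial (Fin 4) k))) (X 2) = X 2 ∧
    (L.foldl (fun acc d => d.rhoHom.comp acc)
        (AlgHom.id k (MvPolynomial (Fin 4) k))) (X 3) = X 3 ∧
    ((aeval ![X 0, X 1 + X 0 * (X 0 * X 3 - X 1 * X 2), X 2,
        X 3 + X 2 * (X 0 * X 3 - X 1 * X 2)] :
      MvPolynomial (Fin 4) k →ₐ[k] MvPolynomial (Fin 4) k) (X 0) -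
      (L.foldl (fun acc d => d.rhoHom.comp acc)
        (AlgHom.id k (MvPolynomial (Fin 4) k))) (X 0))
      ∈ (Ideal.span ({X 0, X 1} : Set (MvPolynomial (Fin 4) k))) ^ 3 ∧
    ((aeval ![X 0, X 1 + X 0 * (X 0 * X 3 - X 1 * X 2), X 2,
        X 3 + X 2 * (X 0 * X 3 - X 1 * X 2)] :
      MvPolynomial (Fin 4) k →ₐ[k] MvPolynomial (Fin 4) k) (X 1) -
      (L.foldl (fun acc d => d.rhoHom.comp acc)
        (AlgHom.id k (MvPolynomial (Fin 4) k))) (X 1))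
      ∈ (Ideal.span ({X 0, X 1} : Set (MvPolynomial (Fin 4) k))) ^ 3  := by
  classical
  have hinv := AnickAux.inv_foldl L hgood
  obtain ⟨hH, ⟨a2, b2, h2⟩, ⟨a3, b3, h3⟩, hd0, hd1, hd2, hd3⟩ := hinv
  rw [hζ] at hd0 hd1 hd2 hd3
  have hP2 : (aeval ![X 0, X 1 + X 0 * (X 0 * X 3 - X 1 * X 2), X 2,
      X 3 + X 2 * (X 0 * X 3 - X 1 * X 2)] :
        MvPolynomial (Fin 4) k →ₐ[k] MvPolynomial (Fin 4) k) (X 2) = X 2 := by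
    simp
  have hP3 : (aeval ![X 0, X 1 + X 0 * (X 0 * X 3 - X 1 * X 2), X 2,
      X 3 + X 2 * (X 0 * X 3 - X 1 * X 2)] :
        MvPolynomial (Fin 4) k →ₐ[k] MvPolynomial (Fin 4) k) (X 3)
      = X 3 + X 2 * (X 0 * X 3 - X 1 * X 2) := by
    simp
  set Q := L.foldl (fun acc d => d.rhoHom.comp acc)
      (AlgHom.id k (MvPolynomial (Fin 4) k)) with hQ
  have hQ2 : Q (X 2) = X 2 := by
    rw [hP2] at hd2
    have hm : AnickAux.memJ 1 (C (1 - a2) * X 2 + C (-b2) * X 3) := by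
      have hrw : C (1 - a2) * X 2 + C (-b2) * X 3 = X 2 - Q (X 2) := by
        rw [h2, map_sub, map_neg, map_one]; ring
      rw [hrw]
      exact AnickAux.mem_I_memJ hd2
    obtain ⟨e1, e2⟩ := AnickAux.memJ_linear hm
    have ha : a2 = 1 := (sub_eq_zero.mp e1).symm
    have hb : b2 = 0 := neg_eq_zero.mp e2
    rw [h2, ha, hb]
    simp
  have hQ3 : Q (X 3) = X 3 := by
    have hq : (X 2 * (X 0 * X 3 - X 1 * X 2) : MvPolynomial (Fin 4) k)
        ∈ AnickAux.Iid k := by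
      have hrw : (X 2 * (X 0 * X 3 - X 1 * X 2) : MvPolynomial (Fin 4) k)
          = (X 2 * X 3) * X 0 - (X 2 * X 2) * X 1 := by ring
      rw [hrw]
      exact Ideal.sub_mem _ (Ideal.mul_mem_left _ _ AnickAux.X0_mem_I)
        (Ideal.mul_mem_left _ _ AnickAux.X1_mem_I)
    have hd3' : X 3 - Q (X 3) ∈ AnickAux.Iid k := by
      have hrw : X 3 - Q (X 3)
          = ((aeval ![X 0, X 1 + X 0 * (X 0 * X 3 - X 1 * X 2), X 2,
              X 3 + X 2 * (X 0 * X 3 - X 1 * X 2)] :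
            MvPolynomial (Fin 4) k →ₐ[k] MvPolynomial (Fin 4) k) (X 3) - Q (X 3))
            - X 2 * (X 0 * X 3 - X 1 * X 2) := by
        rw [hP3]; ring
      rw [hrw]
      exact Ideal.sub_mem _ hd3 hq
    have hm : AnickAux.memJ 1 (C (-a3) * X 2 + C (1 - b3) * X 3) := by
      have hrw : C (-a3) * X 2 + C (1 - b3) * X 3 = X 3 - Q (X 3) := by
        rw [h3, map_sub, map_neg, map_one]; ring
      rw [hrw]
      exact AnickAux.mem_I_memJ hd3'
    obtain ⟨e1, e2⟩ := AnickAux.memJ_linear hm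
    have ha : a3 = 0 := neg_eq_zero.mp e1
    have hb : b3 = 1 := (sub_eq_zero.mp e2).symm
    rw [h3, ha, hb]
    simp
  exact ⟨hQ2, hQ3, hd0, hd1⟩
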